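/- arXiv:2007.10952 — 6 statements merged into one kernel-verified Lean document; each statement's English description precedes it below -/
import Mathlib

section
/- Lasso oracle inequality under weak sparsity (Theorem 1): Assume (i) S_λ := {j : |β⁰_j| > λ} is nonempty, (ii) the weak sparsity bound Σ_{j=1}^N |β⁰_j|^r ≤ s_r holds for some 0 ≤ r < 1 and s_r > 0, (iii) the compatibility condition holds for (Σ, S_λ) with constant φ² > 0, (iv) the covariance closeness bound ‖Σ̂ − Σ‖_∞ ≤ φ²/(32·|S_λ|) holds, and (v) the empirical process bound max_{1≤j≤N} |Σ_{t=1}^T u_t X_{t,j}| ≤ Tλ/4 holds. Then any lasso estimator β̂ satisfies ‖X(β̂ − β⁰)‖₂²/T + (λ/4)·‖β̂ − β⁰‖₁ ≤ (32/3)·λ^{2−r}·s_r/φ² + (8/3)·λ^{2−r}·s_r. -/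
open Finset

private lemma quad_id {T N : ℕ} (X : Matrix (Fin T) (Fin N) ℝ) (v : Fin N → ℝ) :
    ∑ i, ∑ k, v i * (∑ t, X t i * X t k) * v k = ∑ t, (X.mulVec v t)^2 := by
  have h1 : ∀ t, (X.mulVec v t)^2 = ∑ i, ∑ k, v i * (X t i * X t k) * v k := by
    intro t
    have h0 : X.mulVec v t = ∑ j, X t j * v j := by
      simp [Matrix.mulVec, dotProduct]
    rw [h0, sq, Finset.sum_mul_sum]
    exact Finset.sum_congr rfl fun i _ => Finset.sum_congr rfl fun k _ => by ring
  calc ∑ i, ∑ k, v i * (∑ t, X t i * X t k) * v k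
      = ∑ i, ∑ k, ∑ t, v i * (X t i * X t k) * v k := by
        refine Finset.sum_congr rfl fun i _ => Finset.sum_congr rfl fun k _ => ?_
        rw [Finset.mul_sum, Finset.sum_mul]
    _ = ∑ i, ∑ t, ∑ k, v i * (X t i * X t k) * v k :=
        Finset.sum_congr rfl fun i _ => Finset.sum_comm
    _ = ∑ t, ∑ i, ∑ k, v i * (X t i * X t k) * v k := Finset.sum_comm
    _ = ∑ t, (X.mulVec v t)^2 := Finset.sum_congr rfl fun t _ => (h1 t).symm

private lemma swap_id {T N : ℕ} (X : Matrix (Fin T) (Fin N) ℝ) (u : Fin T → ℝ) (v : Fin N → ℝ) :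
    ∑ t, u t * X.mulVec v t = ∑ j, v j * ∑ t, u t * X t j := by
  have h0 : ∀ t, u t * X.mulVec v t = ∑ j, u t * (X t j * v j) := by
    intro t; simp [Matrix.mulVec, dotProduct, Finset.mul_sum]
  rw [Finset.sum_congr rfl fun t _ => h0 t, Finset.sum_comm]
  refine Finset.sum_congr rfl fun j _ => ?_
  rw [Finset.mul_sum]
  exact Finset.sum_congr rfl fun t _ => by ring

private lemma limit_aux {c q : ℝ} (hq : 0 ≤ q)
    (h : ∀ s : ℝ, 0 < s → s ≤ 1 → 0 ≤ c + (s/2)*q) : 0 ≤ c := by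
  by_contra hc
  push_neg at hc
  have hq1 : (0:ℝ) < q + 1 := by linarith
  have hs0 : 0 < min 1 ((-c)/(q+1)) := lt_min one_pos (div_pos (by linarith) hq1)
  have hs1 : min 1 ((-c)/(q+1)) ≤ 1 := min_le_left _ _
  have hsr : min 1 ((-c)/(q+1)) ≤ (-c)/(q+1) := min_le_right _ _
  have h2 : (min 1 ((-c)/(q+1)))*(q+1) ≤ -c := by
    rw [← le_div_iff₀ hq1]; exact hsr
  have h3 := h _ hs0 hs1
  nlinarith [mul_nonneg hs0.le hq]






private lemma arith_A {Q AS AC PS PC HS HC lam : ℝ}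
    (hQle : Q ≤ lam/4 * (AS + AC) + lam*((PS + PC) - (HS + HC)))
    (m1 : lam*((1/2)*AS + (PS - HS)) ≤ lam*((3/2)*AS))
    (m2 : lam*((1/2)*AC + (PC - HC)) ≤ lam*((3/2)*PC)) :
    Q + lam/4*(AS+AC) ≤ (3/2)*(lam*AS) + (3/2)*(lam*PC) := by
  nlinarith [hQle, m1, m2]

private lemma arith_off {Q AS AC PS PC HS HC lam : ℝ} (hlam : 0 ≤ lam)
    (hQle : Q ≤ lam/4 * (AS + AC) + lam*((PS + PC) - (HS + HC)))
    (m1 : lam*((1/2)*AS + (PS - HS)) ≤ lam*((3/2)*AS))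
    (m3 : lam*((1/2)*AC + (PC - HC)) ≤ lam*(2*PC - (1/2)*AC))
    (hc : 3*AS ≤ AC) :
    Q + lam/4*(AS+AC) ≤ 2*(lam*PC) := by
  have mAC : lam*(3*AS) ≤ lam*AC := mul_le_mul_of_nonneg_left hc hlam
  nlinarith [hQle, m1, m3, mAC]

private lemma arith_key {AS AC M Hq Qn φ : ℝ} (hM : 0 < M) (hφ2 : 0 < φ^2)
    (hcpt : AS^2 ≤ M * Hq / φ^2)
    (hquadS : Hq ≤ Qn + (φ^2/(32*M))*((AS+AC)*(AS+AC)))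
    (hAS : 0 ≤ AS) (hAC : 0 ≤ AC) (hcone : AC ≤ 3*AS) :
    AS^2*φ^2 ≤ 2*M*Qn := by
  have h1 := (le_div_iff₀ hφ2).mp hcpt
  have h2 : M * Hq ≤ M*Qn + (φ^2/32)*((AS+AC)*(AS+AC)) := by
    calc M * Hq ≤ M * (Qn + (φ^2/(32*M))*((AS+AC)*(AS+AC))) :=
          mul_le_mul_of_nonneg_left hquadS hM.le
      _ = M*Qn + (φ^2/32)*((AS+AC)*(AS+AC)) := by
          field_simp
  have h16 : (AS+AC)*(AS+AC) ≤ 16*(AS*AS) := by nlinarith [hAS, hAC, hcone]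
  have h4 := mul_le_mul_of_nonneg_left h16 (by positivity : (0:ℝ) ≤ φ^2/32)
  linarith [h1, h2, h4]

private lemma arith_cone {Q AS AC PC M lam φ : ℝ}
    (hM : 0 < M) (hφ2 : 0 < φ^2) (hlam : 0 ≤ lam)
    (hAS : 0 ≤ AS) (hAC : 0 ≤ AC)
    (hA : Q + lam/4*(AS+AC) ≤ (3/2)*(lam*AS) + (3/2)*(lam*PC))
    (hkey : AS^2*φ^2 ≤ 2*M*Q) :
    Q + lam/4*(AS+AC) ≤ 6*lam^2*M/φ^2 + 2*(lam*PC) := by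
  have hQT0 : Q ≤ Q + lam/4*(AS+AC) := by nlinarith [hlam, hAS, hAC]
  have e1 : 2*(Q + lam/4*(AS+AC)) ≤ 3*(lam*AS) + 3*(lam*PC) := by linarith
  have s1 := mul_le_mul_of_nonneg_right e1 (by positivity : (0:ℝ) ≤ M*φ^2)
  have s2 := sq_nonneg (φ^2*AS - 6*lam*M)
  have s3 := mul_le_mul_of_nonneg_right hkey hφ2.le
  have s5 := mul_le_mul_of_nonneg_left hQT0 (by positivity : (0:ℝ) ≤ 2*M*φ^2)
  have h' : M*((Q + lam/4*(AS+AC))*φ^2) ≤ M*(6*lam^2*M + 2*(lam*PC)*φ^2) := by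
    nlinarith [s1, s2, s3, s5]
  have h'' := le_of_mul_le_mul_left h' hM
  have h9 : (Q + lam/4*(AS+AC)) - 2*(lam*PC) ≤ 6*lam^2*M/φ^2 := by
    rw [le_div_iff₀ hφ2]
    linarith
  linarith

set_option maxHeartbeats 1000000 in
/-- **Lasso oracle inequality under weak sparsity (Theorem 1).**
`X` is the `T × N` design matrix, `y = X β⁰ + u`, `Σ̂ = XᵀX/T`, `Sig` is the population
covariance matrix, `Slam = {j : |β⁰_j| > λ}` is the weak sparsity index set, and `βhat` is
any lasso estimator with tuning parameter `lam`. -/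
theorem lasso_oracle_weak_sparsity
    {T N : ℕ} (hT : 0 < T)
    (X : Matrix (Fin T) (Fin N) ℝ) (β0 βhat : Fin N → ℝ) (u y : Fin T → ℝ)
    (hy : y = X.mulVec β0 + u)
    (Sig : Matrix (Fin N) (Fin N) ℝ) (hSigSymm : Sig.IsSymm)
    (lam r sr φ : ℝ) (hlam : 0 < lam) (hr0 : 0 ≤ r) (hr1 : r < 1)
    (hsr : 0 < sr) (hφ : 0 < φ)
    (Slam : Finset (Fin N)) (hSlam : Slam = Finset.univ.filter fun j => lam < |β0 j|)
    -- (i) S_λ nonempty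
    (hSne : Slam.Nonempty)
    -- (ii) weak sparsity: ∑_j |β⁰_j|^r ≤ s_r  (with |c|^0 read as 1 if c ≠ 0, else 0)
    (hsparse : ∑ j, (if β0 j = 0 then (0:ℝ) else |β0 j| ^ r) ≤ sr)
    -- (iii) compatibility condition for (Σ, S_λ) with constant φ² > 0
    (hcompat : ∀ z : Fin N → ℝ,
      (∑ j ∈ Slamᶜ, |z j|) ≤ 3 * ∑ j ∈ Slam, |z j| →
      (∑ j ∈ Slam, |z j|) ^ 2 ≤
        (Slam.card : ℝ) * (∑ i, ∑ k, z i * Sig i k * z k) / φ ^ 2)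
    -- (iv) covariance closeness ‖Σ̂ − Σ‖_∞ ≤ φ²/(32|S_λ|)
    (hclose : ∀ i k, |(X.transpose * X) i k / (T : ℝ) - Sig i k| ≤
      φ ^ 2 / (32 * (Slam.card : ℝ)))
    -- (v) empirical process bound
    (hemp : ∀ j, |∑ t, u t * X t j| ≤ (T : ℝ) * lam / 4)
    -- βhat is a lasso estimator
    (hmin : ∀ β : Fin N → ℝ,
      (∑ t, (y t - X.mulVec βhat t) ^ 2) / (T : ℝ) + 2 * lam * ∑ j, |βhat j|
        ≤ (∑ t, (y t - X.mulVec β t) ^ 2) / (T : ℝ) + 2 * lam * ∑ j, |β j|) :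
    (∑ t, (X.mulVec (βhat - β0) t) ^ 2) / (T : ℝ)
        + (lam / 4) * ∑ j, |βhat j - β0 j|
      ≤ (32 / 3) * lam ^ (2 - r) * sr / φ ^ 2 + (8 / 3) * lam ^ (2 - r) * sr := by
  classical
  have hTpos : (0:ℝ) < (T:ℝ) := by exact_mod_cast hT
  have hTne : (T:ℝ) ≠ 0 := ne_of_gt hTpos
  have hlam0 : (0:ℝ) ≤ lam := hlam.le
  have hφ2 : (0:ℝ) < φ^2 := by positivity
  have hsm : (0:ℝ) < (Slam.card : ℝ) := by
    have := Finset.card_pos.mpr hSne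
    exact_mod_cast this
  -- memberships
  have hmemS : ∀ j ∈ Slam, lam < |β0 j| := by
    intro j hj; rw [hSlam] at hj; exact (Finset.mem_filter.mp hj).2
  have hmemSc : ∀ j ∈ Slamᶜ, |β0 j| ≤ lam := by
    intro j hj
    rw [Finset.mem_compl, hSlam, Finset.mem_filter] at hj
    push_neg at hj
    exact hj (Finset.mem_univ j)
  -- residual identity
  have hres : ∀ t, y t - X.mulVec βhat t = u t - X.mulVec (βhat - β0) t := by
    intro t
    have h1 : X.mulVec (βhat - β0) t = X.mulVec βhat t - X.mulVec β0 t := by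
      rw [Matrix.mulVec_sub]; rfl
    rw [hy, h1]; simp only [Pi.add_apply]; ring
  have hQv0 : (0:ℝ) ≤ ∑ t, (X.mulVec (βhat - β0) t)^2 :=
    Finset.sum_nonneg fun _ _ => sq_nonneg _
  -- directional optimality
  have hstep : ∀ s : ℝ, 0 < s → s ≤ 1 →
      0 ≤ ((∑ t, (y t - X.mulVec βhat t) * X.mulVec (βhat - β0) t)
            + lam*(T:ℝ)*((∑ j, |β0 j|) - ∑ j, |βhat j|))
          + (s/2) * (∑ t, (X.mulVec (βhat - β0) t)^2) := by
    intro s hs0 hs1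
    set β : Fin N → ℝ := fun j => βhat j + s * (β0 j - βhat j) with hβ
    have hlin : ∀ t, X.mulVec β t = X.mulVec βhat t - s * X.mulVec (βhat - β0) t := by
      intro t
      simp only [Matrix.mulVec, dotProduct, hβ, Pi.sub_apply]
      rw [Finset.mul_sum, ← Finset.sum_sub_distrib]
      exact Finset.sum_congr rfl fun j _ => by ring
    have hobj : ∑ t, (y t - X.mulVec β t)^2
        = (∑ t, (y t - X.mulVec βhat t)^2)
          + 2*s*(∑ t, (y t - X.mulVec βhat t) * X.mulVec (βhat - β0) t)
          + s^2*(∑ t, (X.mulVec (βhat - β0) t)^2) := by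
      rw [Finset.mul_sum, Finset.mul_sum, ← Finset.sum_add_distrib, ← Finset.sum_add_distrib]
      exact Finset.sum_congr rfl fun t _ => by rw [hlin t]; ring
    have hpen : ∑ j, |β j| ≤ (1-s) * (∑ j, |βhat j|) + s * (∑ j, |β0 j|) := by
      rw [Finset.mul_sum, Finset.mul_sum, ← Finset.sum_add_distrib]
      refine Finset.sum_le_sum fun j _ => ?_
      have h2 : β j = (1-s)*βhat j + s*β0 j := by simp only [hβ]; ring
      rw [h2]
      calc |(1-s)*βhat j + s*β0 j| ≤ |(1-s)*βhat j| + |s*β0 j| := abs_add_le _ _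
        _ = (1-s)*|βhat j| + s*|β0 j| := by
            rw [abs_mul, abs_mul, abs_of_nonneg (by linarith : (0:ℝ) ≤ 1-s),
              abs_of_nonneg hs0.le]
    have hmain : (∑ t, (y t - X.mulVec βhat t)^2)/(T:ℝ) + 2*lam*∑ j, |βhat j|
        ≤ ((∑ t, (y t - X.mulVec βhat t)^2)
            + 2*s*(∑ t, (y t - X.mulVec βhat t) * X.mulVec (βhat - β0) t)
            + s^2*(∑ t, (X.mulVec (βhat - β0) t)^2))/(T:ℝ)
          + 2*lam*((1-s)*(∑ j, |βhat j|) + s*(∑ j, |β0 j|)) := by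
      have hpen2 := mul_le_mul_of_nonneg_left hpen (by linarith : (0:ℝ) ≤ 2*lam)
      have hm := hmin β
      rw [hobj] at hm
      linarith
    have hmm := mul_le_mul_of_nonneg_right hmain hTpos.le
    rw [add_mul, add_mul, div_mul_cancel₀ _ hTne, div_mul_cancel₀ _ hTne] at hmm
    have h7 : 0 ≤ (2*s) * ((((∑ t, (y t - X.mulVec βhat t) * X.mulVec (βhat - β0) t)
            + lam*(T:ℝ)*((∑ j, |β0 j|) - ∑ j, |βhat j|))
          + (s/2) * (∑ t, (X.mulVec (βhat - β0) t)^2))) := by nlinarith [hmm]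
    nlinarith [h7, hs0]
  have hdir : 0 ≤ (∑ t, (y t - X.mulVec βhat t) * X.mulVec (βhat - β0) t)
      + lam*(T:ℝ)*((∑ j, |β0 j|) - ∑ j, |βhat j|) := limit_aux hQv0 hstep
  -- master inequality
  have hKU : ∑ t, (y t - X.mulVec βhat t) * X.mulVec (βhat - β0) t
      = (∑ t, u t * X.mulVec (βhat - β0) t) - ∑ t, (X.mulVec (βhat - β0) t)^2 := by
    rw [← Finset.sum_sub_distrib]
    exact Finset.sum_congr rfl fun t _ => by rw [hres t]; ring
  have hU : ∑ t, u t * X.mulVec (βhat - β0) t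
      ≤ ((T:ℝ)*lam/4) * ∑ j, |βhat j - β0 j| := by
    rw [swap_id]
    calc ∑ j, (βhat - β0) j * ∑ t, u t * X t j
        ≤ ∑ j, |βhat j - β0 j| * ((T:ℝ)*lam/4) := by
          refine Finset.sum_le_sum fun j _ => ?_
          simp only [Pi.sub_apply]
          calc (βhat j - β0 j) * ∑ t, u t * X t j
              ≤ |(βhat j - β0 j) * ∑ t, u t * X t j| := le_abs_self _
            _ = |βhat j - β0 j| * |∑ t, u t * X t j| := abs_mul _ _
            _ ≤ |βhat j - β0 j| * ((T:ℝ)*lam/4) :=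
                mul_le_mul_of_nonneg_left (hemp j) (abs_nonneg _)
      _ = ((T:ℝ)*lam/4) * ∑ j, |βhat j - β0 j| := by
          rw [← Finset.sum_mul]; ring
  have hMI0 : ∑ t, (X.mulVec (βhat - β0) t)^2
      ≤ ((T:ℝ)*lam/4) * (∑ j, |βhat j - β0 j|)
        + lam*(T:ℝ)*((∑ j, |β0 j|) - ∑ j, |βhat j|) := by
    linarith [hdir, hKU, hU]
  have hQle : (∑ t, (X.mulVec (βhat - β0) t)^2)/(T:ℝ)
      ≤ (lam/4) * (∑ j, |βhat j - β0 j|)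
        + lam*((∑ j, |β0 j|) - ∑ j, |βhat j|) := by
    rw [div_le_iff₀ hTpos]
    nlinarith [hMI0]
  -- splits over Slam / complement
  have hU1 : ∑ j, |βhat j - β0 j|
      = (∑ j ∈ Slam, |βhat j - β0 j|) + ∑ j ∈ Slamᶜ, |βhat j - β0 j| :=
    (Finset.sum_add_sum_compl Slam _).symm
  have hP : ∑ j, |β0 j| = (∑ j ∈ Slam, |β0 j|) + ∑ j ∈ Slamᶜ, |β0 j| :=
    (Finset.sum_add_sum_compl Slam _).symm
  have hH : ∑ j, |βhat j| = (∑ j ∈ Slam, |βhat j|) + ∑ j ∈ Slamᶜ, |βhat j| :=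
    (Finset.sum_add_sum_compl Slam _).symm
  rw [hU1, hP, hH] at hQle
  rw [hU1]
  have hAS0 : (0:ℝ) ≤ ∑ j ∈ Slam, |βhat j - β0 j| :=
    Finset.sum_nonneg fun _ _ => abs_nonneg _
  have hAC0 : (0:ℝ) ≤ ∑ j ∈ Slamᶜ, |βhat j - β0 j| :=
    Finset.sum_nonneg fun _ _ => abs_nonneg _
  have hPC0 : (0:ℝ) ≤ ∑ j ∈ Slamᶜ, |β0 j| :=
    Finset.sum_nonneg fun _ _ => abs_nonneg _
  -- pointwise abs facts
  have hd1 : ∀ j, |β0 j| - |βhat j| ≤ |βhat j - β0 j| := by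
    intro j
    have h := abs_sub_abs_le_abs_sub (β0 j) (βhat j)
    rw [abs_sub_comm] at h
    exact h
  have hd2 : ∀ j, |βhat j - β0 j| ≤ |β0 j| + |βhat j| := by
    intro j
    have h := abs_add_le (βhat j) (-(β0 j))
    rw [abs_neg] at h
    calc |βhat j - β0 j| = |βhat j + -(β0 j)| := by rw [sub_eq_add_neg]
      _ ≤ |βhat j| + |β0 j| := h
      _ = |β0 j| + |βhat j| := add_comm _ _
  -- decomposition equalities
  have hdecS : ∑ j ∈ Slam, ((1/2)*|βhat j - β0 j| + (|β0 j| - |βhat j|))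
      = (1/2)*(∑ j ∈ Slam, |βhat j - β0 j|)
        + ((∑ j ∈ Slam, |β0 j|) - ∑ j ∈ Slam, |βhat j|) := by
    rw [Finset.sum_add_distrib, Finset.sum_sub_distrib, Finset.mul_sum]
  have hdecC : ∑ j ∈ Slamᶜ, ((1/2)*|βhat j - β0 j| + (|β0 j| - |βhat j|))
      = (1/2)*(∑ j ∈ Slamᶜ, |βhat j - β0 j|)
        + ((∑ j ∈ Slamᶜ, |β0 j|) - ∑ j ∈ Slamᶜ, |βhat j|) := by
    rw [Finset.sum_add_distrib, Finset.sum_sub_distrib, Finset.mul_sum]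
  -- form inequalities
  have hSa : (1/2)*(∑ j ∈ Slam, |βhat j - β0 j|)
      + ((∑ j ∈ Slam, |β0 j|) - ∑ j ∈ Slam, |βhat j|)
      ≤ (3/2)*(∑ j ∈ Slam, |βhat j - β0 j|) := by
    rw [← hdecS, Finset.mul_sum]
    exact Finset.sum_le_sum fun j _ => by linarith [hd1 j]
  have hScA : (1/2)*(∑ j ∈ Slamᶜ, |βhat j - β0 j|)
      + ((∑ j ∈ Slamᶜ, |β0 j|) - ∑ j ∈ Slamᶜ, |βhat j|)
      ≤ (3/2)*(∑ j ∈ Slamᶜ, |β0 j|) := by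
    rw [← hdecC, Finset.mul_sum]
    exact Finset.sum_le_sum fun j _ => by linarith [hd2 j, abs_nonneg (βhat j)]
  have hScB : (1/2)*(∑ j ∈ Slamᶜ, |βhat j - β0 j|)
      + ((∑ j ∈ Slamᶜ, |β0 j|) - ∑ j ∈ Slamᶜ, |βhat j|)
      ≤ 2*(∑ j ∈ Slamᶜ, |β0 j|) - (1/2)*(∑ j ∈ Slamᶜ, |βhat j - β0 j|) := by
    rw [← hdecC, Finset.mul_sum, Finset.mul_sum, ← Finset.sum_sub_distrib]
    exact Finset.sum_le_sum fun j _ => by linarith [hd2 j]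
  have m1 := mul_le_mul_of_nonneg_left hSa hlam0
  have m2 := mul_le_mul_of_nonneg_left hScA hlam0
  have m3 := mul_le_mul_of_nonneg_left hScB hlam0
  -- weak sparsity conversions
  have hL0 : (0:ℝ) ≤ lam ^ (2 - r) := Real.rpow_nonneg hlam0 _
  have hw0S : (0:ℝ) ≤ ∑ j ∈ Slam, (if β0 j = 0 then (0:ℝ) else |β0 j| ^ r) := by
    refine Finset.sum_nonneg fun j _ => ?_
    split
    · exact le_refl 0
    · exact Real.rpow_nonneg (abs_nonneg _) _
  have hw0C : (0:ℝ) ≤ ∑ j ∈ Slamᶜ, (if β0 j = 0 then (0:ℝ) else |β0 j| ^ r) := by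
    refine Finset.sum_nonneg fun j _ => ?_
    split
    · exact le_refl 0
    · exact Real.rpow_nonneg (abs_nonneg _) _
  have hwtot : (∑ j ∈ Slam, (if β0 j = 0 then (0:ℝ) else |β0 j| ^ r))
      + (∑ j ∈ Slamᶜ, (if β0 j = 0 then (0:ℝ) else |β0 j| ^ r)) ≤ sr := by
    rw [Finset.sum_add_sum_compl Slam _]
    exact hsparse
  have hpow2 : lam ^ ((2:ℝ) - r) * lam ^ r = lam ^ 2 := by
    have he : ((2:ℝ) - r) + r = ((2:ℕ):ℝ) := by push_cast; ring
    rw [← Real.rpow_add hlam, he, Real.rpow_natCast]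
  have hwS : lam^2*(Slam.card:ℝ)
      ≤ lam^((2:ℝ)-r) * ∑ j ∈ Slam, (if β0 j = 0 then (0:ℝ) else |β0 j| ^ r) := by
    rw [Finset.mul_sum]
    have hconst : lam^2*(Slam.card:ℝ) = ∑ _j ∈ Slam, lam^2 := by
      rw [Finset.sum_const, nsmul_eq_mul]; ring
    rw [hconst]
    refine Finset.sum_le_sum fun j hj => ?_
    have hjlam : lam < |β0 j| := hmemS j hj
    have hne : β0 j ≠ 0 := by
      intro h0
      rw [h0, abs_zero] at hjlam
      linarith
    rw [if_neg hne]
    have h1 : lam ^ r ≤ |β0 j| ^ r := Real.rpow_le_rpow hlam0 hjlam.le hr0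
    calc lam^2 = lam^((2:ℝ)-r)*lam^r := hpow2.symm
      _ ≤ lam^((2:ℝ)-r) * |β0 j|^r := mul_le_mul_of_nonneg_left h1 hL0
  have hwC : lam * (∑ j ∈ Slamᶜ, |β0 j|)
      ≤ lam^((2:ℝ)-r) * ∑ j ∈ Slamᶜ, (if β0 j = 0 then (0:ℝ) else |β0 j| ^ r) := by
    rw [Finset.mul_sum, Finset.mul_sum]
    refine Finset.sum_le_sum fun j hj => ?_
    rcases eq_or_ne (β0 j) 0 with h0 | h0
    · rw [if_pos h0, h0, abs_zero, mul_zero, mul_zero]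
    · rw [if_neg h0]
      have hb : 0 < |β0 j| := abs_pos.mpr h0
      have hble : |β0 j| ≤ lam := hmemSc j hj
      have e1 : |β0 j| ^ r * |β0 j| ^ (1-r) = |β0 j| := by
        rw [← Real.rpow_add hb]
        norm_num
      have e2 : lam ^ ((2:ℝ)-r) = lam * lam ^ (1-r) := by
        rw [show (2:ℝ)-r = 1 + (1-r) by ring, Real.rpow_add hlam, Real.rpow_one]
      have h3 : |β0 j| ^ (1-r) ≤ lam ^ (1-r) :=
        Real.rpow_le_rpow hb.le hble (by linarith)
      have h4 : (0:ℝ) ≤ |β0 j| ^ r := Real.rpow_nonneg (abs_nonneg _) _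
      calc lam * |β0 j| = lam * (|β0 j|^r * |β0 j|^(1-r)) := by rw [e1]
        _ ≤ lam * (|β0 j|^r * lam^(1-r)) := by
            apply mul_le_mul_of_nonneg_left _ hlam0
            exact mul_le_mul_of_nonneg_left h3 h4
        _ = lam^((2:ℝ)-r) * |β0 j|^r := by rw [e2]; ring
  have hwCsr : (∑ j ∈ Slamᶜ, (if β0 j = 0 then (0:ℝ) else |β0 j| ^ r)) ≤ sr := by
    linarith only [hwtot, hw0S]
  have hwSsr : (∑ j ∈ Slam, (if β0 j = 0 then (0:ℝ) else |β0 j| ^ r)) ≤ sr := by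
    linarith only [hwtot, hw0C]
  have g3 : 2*(lam * (∑ j ∈ Slamᶜ, |β0 j|)) ≤ (8/3)*(lam^((2:ℝ)-r)*sr) := by
    have hb : lam^((2:ℝ)-r) * (∑ j ∈ Slamᶜ, (if β0 j = 0 then (0:ℝ) else |β0 j| ^ r))
        ≤ lam^((2:ℝ)-r) * sr :=
      mul_le_mul_of_nonneg_left hwCsr hL0
    have hc : (0:ℝ) ≤ lam^((2:ℝ)-r)*sr := mul_nonneg hL0 hsr.le
    linarith only [hwC, hb, hc]
  have hφt0 : (0:ℝ) ≤ 32/3*lam^((2:ℝ)-r)*sr/φ^2 := by positivity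
  have hA : (∑ t, (X.mulVec (βhat - β0) t)^2)/(T:ℝ)
      + (lam/4)*((∑ j ∈ Slam, |βhat j - β0 j|) + ∑ j ∈ Slamᶜ, |βhat j - β0 j|)
      ≤ (3/2)*(lam*(∑ j ∈ Slam, |βhat j - β0 j|))
        + (3/2)*(lam*(∑ j ∈ Slamᶜ, |β0 j|)) :=
    arith_A hQle m1 m2
  by_cases hcase : (∑ j ∈ Slamᶜ, |βhat j - β0 j|) ≤ 3*∑ j ∈ Slam, |βhat j - β0 j|
  · -- compatibility case
    have hcpt := hcompat (βhat - β0) (by simpa only [Pi.sub_apply] using hcase)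
    simp only [Pi.sub_apply] at hcpt
    have hXtX : ∀ i k, (X.transpose * X) i k = ∑ t, X t i * X t k := by
      intro i k
      simp [Matrix.mul_apply, Matrix.transpose_apply]
    have hhat : ∑ i, ∑ k, (βhat i - β0 i) * ((X.transpose * X) i k / (T:ℝ)) * (βhat k - β0 k)
        = (∑ t, (X.mulVec (βhat - β0) t)^2) / (T:ℝ) := by
      have hq := quad_id X (βhat - β0)
      simp only [Pi.sub_apply] at hq
      rw [← hq, Finset.sum_div]
      refine Finset.sum_congr rfl fun i _ => ?_
      rw [Finset.sum_div]
      refine Finset.sum_congr rfl fun k _ => ?_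
      rw [hXtX i k]
      ring
    have hdiffb : ∑ i, ∑ k, (βhat i - β0 i) * (Sig i k - (X.transpose * X) i k / (T:ℝ)) * (βhat k - β0 k)
        ≤ (φ^2/(32*(Slam.card:ℝ)))
          * ((∑ j, |βhat j - β0 j|) * (∑ j, |βhat j - β0 j|)) := by
      calc ∑ i, ∑ k, (βhat i - β0 i) * (Sig i k - (X.transpose * X) i k / (T:ℝ)) * (βhat k - β0 k)
          ≤ ∑ i, ∑ k, |βhat i - β0 i| * (φ^2/(32*(Slam.card:ℝ))) * |βhat k - β0 k| := by
            refine Finset.sum_le_sum fun i _ => Finset.sum_le_sum fun k _ => ?_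
            have h5 : |Sig i k - (X.transpose*X) i k/(T:ℝ)| ≤ φ^2/(32*(Slam.card:ℝ)) := by
              rw [abs_sub_comm]; exact hclose i k
            calc (βhat i - β0 i) * (Sig i k - (X.transpose * X) i k / (T:ℝ)) * (βhat k - β0 k)
                ≤ |(βhat i - β0 i) * (Sig i k - (X.transpose * X) i k / (T:ℝ)) * (βhat k - β0 k)| :=
                  le_abs_self _
              _ = |βhat i - β0 i| * |Sig i k - (X.transpose*X) i k/(T:ℝ)| * |βhat k - β0 k| := by
                  rw [abs_mul, abs_mul]
              _ ≤ |βhat i - β0 i| * (φ^2/(32*(Slam.card:ℝ))) * |βhat k - β0 k| := by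
                  apply mul_le_mul_of_nonneg_right _ (abs_nonneg _)
                  exact mul_le_mul_of_nonneg_left h5 (abs_nonneg _)
        _ = (φ^2/(32*(Slam.card:ℝ)))
            * ((∑ j, |βhat j - β0 j|) * (∑ j, |βhat j - β0 j|)) := by
            rw [Finset.sum_mul_sum, Finset.mul_sum]
            refine Finset.sum_congr rfl fun i _ => ?_
            rw [Finset.mul_sum]
            exact Finset.sum_congr rfl fun k _ => by ring
    rw [hU1] at hdiffb
    have hsplitsum : ∑ i, ∑ k, (βhat i - β0 i) * Sig i k * (βhat k - β0 k)
        = (∑ i, ∑ k, (βhat i - β0 i) * ((X.transpose*X) i k/(T:ℝ)) * (βhat k - β0 k))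
          + ∑ i, ∑ k, (βhat i - β0 i) * (Sig i k - (X.transpose*X) i k/(T:ℝ)) * (βhat k - β0 k) := by
      rw [← Finset.sum_add_distrib]
      refine Finset.sum_congr rfl fun i _ => ?_
      rw [← Finset.sum_add_distrib]
      exact Finset.sum_congr rfl fun k _ => by ring
    have hquadS : (∑ i, ∑ k, (βhat i - β0 i) * Sig i k * (βhat k - β0 k))
        ≤ (∑ t, (X.mulVec (βhat - β0) t)^2)/(T:ℝ)
          + (φ^2/(32*(Slam.card:ℝ)))
            * (((∑ j ∈ Slam, |βhat j - β0 j|) + ∑ j ∈ Slamᶜ, |βhat j - β0 j|)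
              * ((∑ j ∈ Slam, |βhat j - β0 j|) + ∑ j ∈ Slamᶜ, |βhat j - β0 j|)) := by
      rw [hsplitsum, hhat]
      linarith only [hdiffb]
    have hkey := arith_key hsm hφ2 hcpt hquadS hAS0 hAC0 hcase
    have hfin := arith_cone hsm hφ2 hlam0 hAS0 hAC0 hA hkey
    have g1 : 6*lam^2*(Slam.card:ℝ) ≤ (32/3)*(lam^((2:ℝ)-r)*sr) := by
      have hb := mul_le_mul_of_nonneg_left hwSsr hL0
      have hc : (0:ℝ) ≤ lam^((2:ℝ)-r)*sr := mul_nonneg hL0 hsr.le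
      linarith only [hwS, hb, hc]
    have g2 : 6*lam^2*(Slam.card:ℝ)/φ^2 ≤ (32/3)*(lam^((2:ℝ)-r)*sr)/φ^2 :=
      (div_le_div_iff_of_pos_right hφ2).mpr g1
    have e0 : 32/3*lam^((2:ℝ)-r)*sr/φ^2 = 32/3*(lam^((2:ℝ)-r)*sr)/φ^2 := by ring
    rw [e0]
    linarith only [hfin, g2, g3]
  · -- off-cone case
    push_neg at hcase
    have hT0 := arith_off hlam0 hQle m1 m3 hcase.le
    linarith only [hT0, g3, hφt0]
end

section
/- General oracle inequality for the lasso (Lemma A.3): Let S ⊆ {1,…,N} be a nonempty index set. Assume (i) the compatibility condition holds for (Σ, S) with constant φ² > 0, (ii) ‖Σ̂ − Σ‖_∞ ≤ φ²/(32·|S|), and (iii) max_{1≤j≤N} |Σ_{t=1}^T u_t X_{t,j}| ≤ Tλ/4. Then any lasso estimator β̂ satisfies ‖X(β̂ − β⁰)‖₂²/T + (λ/4)·‖β̂ − β⁰‖₁ ≤ (32/3)·λ²·|S|/φ² + (8/3)·λ·‖β⁰_{S^c}‖₁. -/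
open Finset
set_option maxHeartbeats 1000000

/-- **General oracle inequality for the lasso (Lemma A.3).**
`X` is the `T × N` design matrix, `y = X β⁰ + u`, `Σ̂ = XᵀX/T`, `Sig` the population
covariance matrix, `S` a nonempty index set, and `βhat` any lasso estimator. -/
theorem lasso_general_oracle
    {T N : ℕ} (hT : 0 < T)
    (X : Matrix (Fin T) (Fin N) ℝ) (β0 βhat : Fin N → ℝ) (u y : Fin T → ℝ)
    (hy : y = X.mulVec β0 + u)
    (Sig : Matrix (Fin N) (Fin N) ℝ) (hSigSymm : Sig.IsSymm)
    (lam φ : ℝ) (hlam : 0 < lam) (hφ : 0 < φ)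
    (S : Finset (Fin N)) (hSne : S.Nonempty)
    -- (i) compatibility condition for (Σ, S) with constant φ² > 0
    (hcompat : ∀ z : Fin N → ℝ,
      (∑ j ∈ Sᶜ, |z j|) ≤ 3 * ∑ j ∈ S, |z j| →
      (∑ j ∈ S, |z j|) ^ 2 ≤
        (S.card : ℝ) * (∑ i, ∑ k, z i * Sig i k * z k) / φ ^ 2)
    -- (ii) covariance closeness ‖Σ̂ − Σ‖_∞ ≤ φ²/(32|S|)
    (hclose : ∀ i k, |(X.transpose * X) i k / (T : ℝ) - Sig i k| ≤
      φ ^ 2 / (32 * (S.card : ℝ)))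
    -- (iii) empirical process bound
    (hemp : ∀ j, |∑ t, u t * X t j| ≤ (T : ℝ) * lam / 4)
    -- βhat is a lasso estimator
    (hmin : ∀ β : Fin N → ℝ,
      (∑ t, (y t - X.mulVec βhat t) ^ 2) / (T : ℝ) + 2 * lam * ∑ j, |βhat j|
        ≤ (∑ t, (y t - X.mulVec β t) ^ 2) / (T : ℝ) + 2 * lam * ∑ j, |β j|) :
    (∑ t, (X.mulVec (βhat - β0) t) ^ 2) / (T : ℝ)
        + (lam / 4) * ∑ j, |βhat j - β0 j|
      ≤ (32 / 3) * lam ^ 2 * (S.card : ℝ) / φ ^ 2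
        + (8 / 3) * lam * ∑ j ∈ Sᶜ, |β0 j| := by
  have hT' : (0:ℝ) < (T:ℝ) := by exact_mod_cast hT
  have hT0 : (T:ℝ) ≠ 0 := ne_of_gt hT'
  set s : ℝ := (S.card : ℝ) with hs_def
  have hs0 : (0:ℝ) < s := by
    rw [hs_def]
    exact_mod_cast Finset.card_pos.mpr hSne
  have hφ2 : (0:ℝ) < φ^2 := by positivity
  set w : Fin T → ℝ := X.mulVec (βhat - β0) with hw_def
  set W : ℝ := ∑ t, w t ^ 2 with hW_def
  set V : ℝ := W / (T:ℝ) with hV_def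
  set a : ℝ := ∑ j ∈ S, |βhat j - β0 j| with ha_def
  set b : ℝ := ∑ j ∈ Sᶜ, |βhat j - β0 j| with hb_def
  set B : ℝ := ∑ j ∈ Sᶜ, |β0 j| with hB_def
  have ha0 : 0 ≤ a := by rw [ha_def]; exact Finset.sum_nonneg fun j _ => abs_nonneg _
  have hb0 : 0 ≤ b := by rw [hb_def]; exact Finset.sum_nonneg fun j _ => abs_nonneg _
  have hB0 : 0 ≤ B := by rw [hB_def]; exact Finset.sum_nonneg fun j _ => abs_nonneg _
  have hW0 : 0 ≤ W := by rw [hW_def]; exact Finset.sum_nonneg fun t _ => sq_nonneg _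
  have hV0 : 0 ≤ V := by rw [hV_def]; positivity
  have habs : ∑ j, |βhat j - β0 j| = a + b := by
    rw [ha_def, hb_def]; exact (Finset.sum_add_sum_compl S _).symm
  -- expansion of mulVec
  have hmv : ∀ (v : Fin N → ℝ) (t : Fin T), X.mulVec v t = ∑ j, X t j * v j := by
    intro v t; simp [Matrix.mulVec, dotProduct]
  have hwt : ∀ t, w t = ∑ j, X t j * (βhat j - β0 j) := by
    intro t; rw [hw_def, hmv]; simp
  have hwsub : ∀ t, w t = X.mulVec βhat t - X.mulVec β0 t := by
    intro t
    rw [hwt t, hmv, hmv, ← Finset.sum_sub_distrib]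
    exact Finset.sum_congr rfl fun j _ => by ring
  have hyt : ∀ t, y t = X.mulVec β0 t + u t := by
    intro t; rw [hy]; rfl
  have e1 : ∀ t, y t - X.mulVec βhat t = u t - w t := by
    intro t; rw [hyt t, hwsub t]; ring
  -- the convex combination comparison point
  set β₁ : Fin N → ℝ := fun j => (1/5) * β0 j + (4/5) * βhat j with hβ₁_def
  have e2 : ∀ t, y t - X.mulVec β₁ t = u t - (4/5) * w t := by
    intro t
    have h1 : X.mulVec β₁ t = (1/5) * X.mulVec β0 t + (4/5) * X.mulVec βhat t := by
      rw [hmv, hmv, hmv, Finset.mul_sum, Finset.mul_sum, ← Finset.sum_add_distrib]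
      exact Finset.sum_congr rfl fun j _ => by simp only [hβ₁_def]; ring
    rw [hyt t, h1, hwsub t]; ring
  set U : ℝ := ∑ t, u t ^ 2 with hU_def
  set C : ℝ := ∑ t, u t * w t with hC_def
  have S1 : ∑ t, (y t - X.mulVec βhat t) ^ 2 = U - 2*C + W := by
    rw [hU_def, hC_def, hW_def, Finset.mul_sum, ← Finset.sum_sub_distrib,
      ← Finset.sum_add_distrib]
    exact Finset.sum_congr rfl fun t _ => by rw [e1 t]; ring
  have S2 : ∑ t, (y t - X.mulVec β₁ t) ^ 2 = U - (8/5)*C + (16/25)*W := by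
    rw [hU_def, hC_def, hW_def, Finset.mul_sum, Finset.mul_sum, ← Finset.sum_sub_distrib,
      ← Finset.sum_add_distrib]
    exact Finset.sum_congr rfl fun t _ => by rw [e2 t]; ring
  -- cross term bound
  have hC : C ≤ (T:ℝ) * lam / 4 * (a + b) := by
    have hCrep : C = ∑ j, (∑ t, u t * X t j) * (βhat j - β0 j) := by
      rw [hC_def]
      have h : ∀ t, u t * w t = ∑ j, u t * X t j * (βhat j - β0 j) := by
        intro t; rw [hwt t, Finset.mul_sum]
        exact Finset.sum_congr rfl fun j _ => by ring
      rw [Finset.sum_congr rfl fun t _ => h t, Finset.sum_comm]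
      exact Finset.sum_congr rfl fun j _ => by rw [Finset.sum_mul]
    calc C ≤ |C| := le_abs_self _
      _ ≤ ∑ j, |(∑ t, u t * X t j) * (βhat j - β0 j)| := by
          rw [hCrep]; exact Finset.abs_sum_le_sum_abs _ _
      _ ≤ ∑ j, (T:ℝ) * lam / 4 * |βhat j - β0 j| := by
          refine Finset.sum_le_sum fun j _ => ?_
          rw [abs_mul]
          exact mul_le_mul_of_nonneg_right (hemp j) (abs_nonneg _)
      _ = (T:ℝ) * lam / 4 * (a + b) := by rw [← Finset.mul_sum, habs]
  have hCn : C / (T:ℝ) ≤ lam / 4 * (a + b) := by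
    rw [div_le_iff₀ hT']
    calc C ≤ (T:ℝ) * lam / 4 * (a + b) := hC
      _ = lam / 4 * (a + b) * (T:ℝ) := by ring
  -- ℓ1 norm bounds
  have h11 : ∑ j, |β₁ j| ≤ (1/5) * ∑ j, |β0 j| + (4/5) * ∑ j, |βhat j| := by
    rw [Finset.mul_sum, Finset.mul_sum, ← Finset.sum_add_distrib]
    refine Finset.sum_le_sum fun j _ => ?_
    calc |β₁ j| = |(1/5) * β0 j + (4/5) * βhat j| := by rw [hβ₁_def]
      _ ≤ |(1/5) * β0 j| + |(4/5) * βhat j| := abs_add_le _ _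
      _ = 1/5 * |β0 j| + 4/5 * |βhat j| := by
          rw [abs_mul, abs_mul, abs_of_nonneg (by norm_num : (0:ℝ) ≤ 1/5),
            abs_of_nonneg (by norm_num : (0:ℝ) ≤ 4/5)]
  have hPlow : (∑ j, |β0 j|) + (b - a - 2*B) ≤ ∑ j, |βhat j| := by
    have hS : ∑ j ∈ S, |β0 j| - a ≤ ∑ j ∈ S, |βhat j| := by
      rw [ha_def, ← Finset.sum_sub_distrib]
      refine Finset.sum_le_sum fun j _ => ?_
      have h := abs_sub_abs_le_abs_sub (β0 j) (βhat j)
      rw [abs_sub_comm] at h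
      linarith
    have hSc : b - B ≤ ∑ j ∈ Sᶜ, |βhat j| := by
      rw [hb_def, hB_def, ← Finset.sum_sub_distrib]
      refine Finset.sum_le_sum fun j _ => ?_
      have h := abs_sub (βhat j) (β0 j)
      linarith
    have h1 : ∑ j, |β0 j| = ∑ j ∈ S, |β0 j| + B := by
      rw [hB_def]; exact (Finset.sum_add_sum_compl S _).symm
    have h2 : ∑ j, |βhat j| = ∑ j ∈ S, |βhat j| + ∑ j ∈ Sᶜ, |βhat j| :=
      (Finset.sum_add_sum_compl S _).symm
    rw [h1, h2]; linarith
  -- the basic inequality from minimality at β₁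
  have hbasic := hmin β₁
  rw [S1, S2] at hbasic
  have hd1 : (U - 2*C + W) / (T:ℝ) = U/(T:ℝ) - 2*(C/(T:ℝ)) + V := by
    rw [hV_def]; ring
  have hd2 : (U - (8/5)*C + (16/25)*W) / (T:ℝ) = U/(T:ℝ) - (8/5)*(C/(T:ℝ)) + (16/25)*V := by
    rw [hV_def]; ring
  rw [hd1, hd2] at hbasic
  have hm1 : 2*lam*(∑ j, |β₁ j|) ≤ 2*lam*((1/5) * ∑ j, |β0 j| + (4/5) * ∑ j, |βhat j|) :=
    mul_le_mul_of_nonneg_left h11 (by positivity)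
  have hm2 : (2/5)*lam*((∑ j, |β0 j|) + (b - a - 2*B)) ≤ (2/5)*lam*(∑ j, |βhat j|) :=
    mul_le_mul_of_nonneg_left hPlow (by positivity)
  have MAIN : (9/25)*V + (3/10)*(lam*b) ≤ (1/2)*(lam*a) + (4/5)*(lam*B) := by
    linarith [hbasic, hCn, hm1, hm2]
  clear_value s w W V a b B U C β₁
  rcases le_or_gt b (3*a) with hcone | hncone
  · -- cone case: use compatibility
    have hcomp := hcompat (fun j => βhat j - β0 j) (by
      rw [← ha_def, ← hb_def]
      exact hcone)
    rw [← ha_def] at hcomp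
    -- quadratic form identity: empirical quadratic form equals V
    have hE : ∀ i k, (X.transpose * X) i k = ∑ t, X t i * X t k := by
      intro i k
      rw [Matrix.mul_apply]
      exact Finset.sum_congr rfl fun t _ => by rw [Matrix.transpose_apply]
    have hper : ∀ t, ∑ i, ∑ k, (βhat i - β0 i) * (X t i * X t k) * (βhat k - β0 k)
        = w t ^ 2 := by
      intro t
      rw [hwt t, sq, Finset.sum_mul_sum]
      exact Finset.sum_congr rfl fun i _ => Finset.sum_congr rfl fun k _ => by ring
    have hQ1 : ∑ i, ∑ k, (βhat i - β0 i) * ((X.transpose * X) i k / (T:ℝ)) * (βhat k - β0 k)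
        = V := by
      have step1 : ∀ i k, (βhat i - β0 i) * ((X.transpose * X) i k / (T:ℝ)) * (βhat k - β0 k)
          = ((βhat i - β0 i) * ((X.transpose * X) i k) * (βhat k - β0 k)) / (T:ℝ) := by
        intro i k; ring
      calc ∑ i, ∑ k, (βhat i - β0 i) * ((X.transpose * X) i k / (T:ℝ)) * (βhat k - β0 k)
          = (∑ i, ∑ k, (βhat i - β0 i) * ((X.transpose * X) i k) * (βhat k - β0 k)) / (T:ℝ) := by
            rw [Finset.sum_div]
            refine Finset.sum_congr rfl fun i _ => ?_
            rw [Finset.sum_div]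
            exact Finset.sum_congr rfl fun k _ => step1 i k
        _ = W / (T:ℝ) := by
            congr 1
            calc ∑ i, ∑ k, (βhat i - β0 i) * ((X.transpose * X) i k) * (βhat k - β0 k)
                = ∑ i, ∑ t, ∑ k, (βhat i - β0 i) * (X t i * X t k) * (βhat k - β0 k) := by
                  refine Finset.sum_congr rfl fun i _ => ?_
                  rw [← Finset.sum_comm]
                  refine Finset.sum_congr rfl fun k _ => ?_
                  rw [hE i k, Finset.mul_sum, Finset.sum_mul]
              _ = ∑ t, ∑ i, ∑ k, (βhat i - β0 i) * (X t i * X t k) * (βhat k - β0 k) :=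
                  Finset.sum_comm
              _ = ∑ t, w t ^ 2 := Finset.sum_congr rfl fun t _ => hper t
              _ = W := hW_def.symm
        _ = V := hV_def.symm
    -- perturbation bound
    have hQ2 : ∑ i, ∑ k, (βhat i - β0 i) * (Sig i k - (X.transpose * X) i k / (T:ℝ)) * (βhat k - β0 k)
        ≤ φ^2/(32*s) * (a+b)^2 := by
      have hterm : ∀ i k, (βhat i - β0 i) * (Sig i k - (X.transpose * X) i k / (T:ℝ)) * (βhat k - β0 k)
          ≤ |βhat i - β0 i| * (φ^2/(32*s)) * |βhat k - β0 k| := by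
        intro i k
        calc (βhat i - β0 i) * (Sig i k - (X.transpose * X) i k / (T:ℝ)) * (βhat k - β0 k)
            ≤ |(βhat i - β0 i) * (Sig i k - (X.transpose * X) i k / (T:ℝ)) * (βhat k - β0 k)| :=
              le_abs_self _
          _ = |βhat i - β0 i| * |Sig i k - (X.transpose * X) i k / (T:ℝ)| * |βhat k - β0 k| := by
              rw [abs_mul, abs_mul]
          _ ≤ |βhat i - β0 i| * (φ^2/(32*s)) * |βhat k - β0 k| := by
              have h := hclose i k
              rw [abs_sub_comm] at h
              exact mul_le_mul_of_nonneg_right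
                (mul_le_mul_of_nonneg_left h (abs_nonneg _)) (abs_nonneg _)
      calc ∑ i, ∑ k, (βhat i - β0 i) * (Sig i k - (X.transpose * X) i k / (T:ℝ)) * (βhat k - β0 k)
          ≤ ∑ i, ∑ k, |βhat i - β0 i| * (φ^2/(32*s)) * |βhat k - β0 k| :=
            Finset.sum_le_sum fun i _ => Finset.sum_le_sum fun k _ => hterm i k
        _ = (φ^2/(32*s)) * ∑ i, ∑ k, |βhat i - β0 i| * |βhat k - β0 k| := by
            rw [Finset.mul_sum]
            refine Finset.sum_congr rfl fun i _ => ?_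
            rw [Finset.mul_sum]
            exact Finset.sum_congr rfl fun k _ => by ring
        _ = (φ^2/(32*s)) * ((∑ i, |βhat i - β0 i|) * (∑ k, |βhat k - β0 k|)) := by
            rw [Finset.sum_mul_sum]
        _ = φ^2/(32*s) * (a+b)^2 := by rw [habs]; ring
    have hQle : (∑ i, ∑ k, (βhat i - β0 i) * Sig i k * (βhat k - β0 k))
        ≤ V + φ^2/(32*s) * (a+b)^2 := by
      have hsplit : (∑ i, ∑ k, (βhat i - β0 i) * Sig i k * (βhat k - β0 k))
          = (∑ i, ∑ k, (βhat i - β0 i) * ((X.transpose * X) i k / (T:ℝ)) * (βhat k - β0 k))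
          + ∑ i, ∑ k, (βhat i - β0 i) * (Sig i k - (X.transpose * X) i k / (T:ℝ)) * (βhat k - β0 k) := by
        rw [← Finset.sum_add_distrib]
        refine Finset.sum_congr rfl fun i _ => ?_
        rw [← Finset.sum_add_distrib]
        exact Finset.sum_congr rfl fun k _ => by ring
      rw [hsplit, hQ1]
      linarith [hQ2]
    -- from compatibility: φ² a² ≤ 2 s V
    have hVa : φ^2 * a^2 ≤ 2*s*V := by
      have h1 : a^2 * φ^2 ≤ s * (∑ i, ∑ k, (βhat i - β0 i) * Sig i k * (βhat k - β0 k)) := by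
        rw [le_div_iff₀ hφ2] at hcomp
        exact hcomp
      have hab4 : (a+b)^2 ≤ 16*a^2 := by
        have hprod : 0 ≤ (3*a - b) * (5*a + b) :=
          mul_nonneg (by linarith) (by linarith)
        nlinarith [hprod]
      have hsne : s ≠ 0 := ne_of_gt hs0
      have hφne : φ ≠ 0 := ne_of_gt hφ
      have h2 : s * (V + φ^2/(32*s) * (a+b)^2) = s*V + φ^2/32 * (a+b)^2 := by
        field_simp
      have h3 := mul_le_mul_of_nonneg_left hQle hs0.le
      rw [h2] at h3
      have h4 : φ^2/32 * (a+b)^2 ≤ φ^2/32 * (16*a^2) :=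
        mul_le_mul_of_nonneg_left hab4 (by positivity)
      linarith [h3, h1, h4]
    -- final quadratic bound
    have h9' : (23/12)*(lam*a)*(30*s*φ^2) ≤ 6*s*φ^2*V + 320*lam^2*s^2 := by
      have hVa3 : 3*φ^2*(φ^2*a^2) ≤ 3*φ^2*(2*s*V) :=
        mul_le_mul_of_nonneg_left hVa (by positivity)
      linarith [sq_nonneg (φ^2*a - (115/12)*lam*s), sq_nonneg (lam*s), hVa3]
    have h9 : (23/12)*(lam*a) ≤ (1/5)*V + (32/3)*lam^2*s/φ^2 := by
      have hsne : s ≠ 0 := ne_of_gt hs0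
      have hφne : φ ≠ 0 := ne_of_gt hφ
      have hM : (0:ℝ) < 30*s*φ^2 := by positivity
      rw [show (1/5)*V + (32/3)*lam^2*s/φ^2 = (6*s*φ^2*V + 320*lam^2*s^2)/(30*s*φ^2) by
        field_simp
        ring]
      rw [le_div_iff₀ hM]
      linarith [h9']
    rw [habs]
    have hlb : 0 ≤ lam * b := by positivity
    linarith [MAIN, h9, hlb]
  · -- non-cone case
    rw [habs]
    have hla : lam * a ≤ lam * (b / 3) := by
      have h : a ≤ b / 3 := by linarith
      exact mul_le_mul_of_nonneg_left h hlam.le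
    have hpos : 0 ≤ (32/3) * lam^2 * s / φ^2 := by positivity
    have hlb2 : 0 ≤ lam * b := by positivity
    have hlB2 : 0 ≤ lam * B := by positivity
    linarith [MAIN, hla, hpos, hlb2, hlB2]
end

section
/- Transfer of the compatibility condition from the population to the sample covariance matrix (Lemma A.2): Let S ⊆ {1,…,N} be nonempty, and suppose the compatibility condition holds for (Σ, S) with constant φ² > 0, i.e. ‖z_S‖₁² ≤ |S|·(zᵀΣz)/φ² for all z ∈ ℝ^N with ‖z_{S^c}‖₁ ≤ 3‖z_S‖₁. If ‖Σ̂ − Σ‖_∞ ≤ φ²/(32·|S|), then for all z ∈ ℝ^N with ‖z_{S^c}‖₁ ≤ 3‖z_S‖₁ one has ‖z_S‖₁ ≤ √(2·|S|·zᵀΣ̂z)/φ. -/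
open Finset

/-- **Transfer of the compatibility condition from the population to the sample
covariance matrix (Lemma A.2).** -/
theorem compatibility_transfer
    {N : ℕ} (Sig Sighat : Matrix (Fin N) (Fin N) ℝ)
    (hSigSymm : Sig.IsSymm) (hSighatSymm : Sighat.IsSymm)
    (hSigPSD : ∀ z : Fin N → ℝ, 0 ≤ ∑ i, ∑ k, z i * Sig i k * z k)
    (hSighatPSD : ∀ z : Fin N → ℝ, 0 ≤ ∑ i, ∑ k, z i * Sighat i k * z k)
    (S : Finset (Fin N)) (hSne : S.Nonempty) (φ : ℝ) (hφ : 0 < φ)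
    -- compatibility condition for (Σ, S) with constant φ² > 0
    (hcompat : ∀ z : Fin N → ℝ,
      (∑ j ∈ Sᶜ, |z j|) ≤ 3 * ∑ j ∈ S, |z j| →
      (∑ j ∈ S, |z j|) ^ 2 ≤
        (S.card : ℝ) * (∑ i, ∑ k, z i * Sig i k * z k) / φ ^ 2)
    -- covariance closeness ‖Σ̂ − Σ‖_∞ ≤ φ²/(32|S|)
    (hclose : ∀ i k, |Sighat i k - Sig i k| ≤ φ ^ 2 / (32 * (S.card : ℝ))) :
    ∀ z : Fin N → ℝ,
      (∑ j ∈ Sᶜ, |z j|) ≤ 3 * ∑ j ∈ S, |z j| →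
      ∑ j ∈ S, |z j| ≤
        Real.sqrt (2 * (S.card : ℝ) * (∑ i, ∑ k, z i * Sighat i k * z k)) / φ := by

  intro z hcone
  set s : ℝ := (S.card : ℝ) with hs
  have hspos : 0 < s := by
    have h := Finset.card_pos.mpr hSne
    rw [hs]; exact_mod_cast h
  set a : ℝ := ∑ j ∈ S, |z j| with ha
  set b : ℝ := ∑ j ∈ Sᶜ, |z j| with hb
  have ha0 : 0 ≤ a := Finset.sum_nonneg fun j _ => abs_nonneg _
  have hb0 : 0 ≤ b := Finset.sum_nonneg fun j _ => abs_nonneg _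
  set Q : ℝ := ∑ i, ∑ k, z i * Sig i k * z k with hQ
  set Qh : ℝ := ∑ i, ∑ k, z i * Sighat i k * z k with hQh
  set lam : ℝ := φ ^ 2 / (32 * s) with hlam
  have hsum1 : (∑ i, |z i|) = a + b := by
    rw [ha, hb, Finset.sum_add_sum_compl]
  have hdiff : |Qh - Q| ≤ lam * (∑ i, |z i|) ^ 2 := by
    have h1 : Qh - Q = ∑ i, ∑ k, z i * (Sighat i k - Sig i k) * z k := by
      rw [hQh, hQ, ← Finset.sum_sub_distrib]
      congr 1; ext i
      rw [← Finset.sum_sub_distrib]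
      congr 1; ext k; ring
    rw [h1]
    calc |∑ i, ∑ k, z i * (Sighat i k - Sig i k) * z k|
        ≤ ∑ i, |∑ k, z i * (Sighat i k - Sig i k) * z k| :=
          Finset.abs_sum_le_sum_abs _ _
      _ ≤ ∑ i, ∑ k, |z i * (Sighat i k - Sig i k) * z k| :=
          Finset.sum_le_sum fun i _ => Finset.abs_sum_le_sum_abs _ _
      _ ≤ ∑ i, ∑ k, |z i| * lam * |z k| := by
          refine Finset.sum_le_sum fun i _ => Finset.sum_le_sum fun k _ => ?_
          rw [abs_mul, abs_mul]
          have := hclose i k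
          have hz1 : 0 ≤ |z i| := abs_nonneg _
          have hz2 : 0 ≤ |z k| := abs_nonneg _
          exact mul_le_mul_of_nonneg_right
            (mul_le_mul_of_nonneg_left (hclose i k) hz1) hz2
      _ = lam * (∑ i, |z i|) ^ 2 := by
          rw [Finset.sum_comm]
          simp_rw [← Finset.sum_mul, ← Finset.mul_sum]
          ring
  have hcone' : a + b ≤ 4 * a := by linarith
  have hsum2 : (∑ i, |z i|) ^ 2 ≤ 16 * a ^ 2 := by
    rw [hsum1]
    nlinarith
  have hcomp := hcompat z hcone
  -- a^2 ≤ s * Q / φ^2, i.e. φ^2 * a^2 ≤ s * Q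
  have hQ0 : 0 ≤ Q := hSigPSD z
  have hkey : φ ^ 2 * a ^ 2 ≤ s * Q := by
    have hφ2 : 0 < φ ^ 2 := by positivity
    rw [le_div_iff₀ hφ2] at hcomp
    linarith
  have hlam16 : lam * (16 * a ^ 2) ≤ Q / 2 := by
    rw [hlam]
    rw [div_mul_eq_mul_div, div_le_div_iff₀ (by positivity) (by norm_num : (0:ℝ) < 2)]
    nlinarith
  have hQhge : Q / 2 ≤ Qh := by
    have h1 : Q - Qh ≤ |Qh - Q| := by
      rw [abs_sub_comm]; exact le_abs_self _
    have h2 : lam * (∑ i, |z i|) ^ 2 ≤ lam * (16 * a ^ 2) := by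
      have hlam0 : 0 ≤ lam := by positivity
      nlinarith
    linarith
  have hfinal : (a * φ) ^ 2 ≤ 2 * s * Qh := by
    nlinarith
  have hgoal : a * φ ≤ Real.sqrt (2 * s * Qh) := by
    have := Real.sqrt_le_sqrt hfinal
    rwa [Real.sqrt_sq (by positivity)] at this
  rw [le_div_iff₀ hφ]
  exact hgoal
end

section
/- Monotonicity of the normalized compatibility constant (Lemma A.5): Let Σ be a symmetric positive semidefinite N×N real matrix and let ∅ ≠ S_λ ⊆ S_0 ⊆ {1,…,N}. Then φ²_Σ(S_0)/|S_0| ≤ φ²_Σ(S_λ)/|S_λ|. -/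
open Finset

/-- The compatibility constant
`φ²_Σ(S) = inf { |S|·(zᵀΣz)/‖z_S‖₁² : ‖z_{Sᶜ}‖₁ ≤ 3‖z_S‖₁, z_S ≠ 0 }`. -/
noncomputable def compatConst {N : ℕ} (Sig : Matrix (Fin N) (Fin N) ℝ)
    (S : Finset (Fin N)) : ℝ :=
  sInf { q : ℝ | ∃ z : Fin N → ℝ,
    (∑ j ∈ Sᶜ, |z j|) ≤ 3 * ∑ j ∈ S, |z j| ∧ (∑ j ∈ S, |z j|) ≠ 0 ∧
    q = (S.card : ℝ) * (∑ i, ∑ k, z i * Sig i k * z k) / (∑ j ∈ S, |z j|) ^ 2 }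

/-- **Monotonicity of the normalized compatibility constant (Lemma A.5).**
For `∅ ≠ S_λ ⊆ S_0`, one has `φ²_Σ(S_0)/|S_0| ≤ φ²_Σ(S_λ)/|S_λ|`. -/
theorem compatConst_normalized_mono
    {N : ℕ} (Sig : Matrix (Fin N) (Fin N) ℝ)
    (hSymm : Sig.IsSymm)
    (hPSD : ∀ z : Fin N → ℝ, 0 ≤ ∑ i, ∑ k, z i * Sig i k * z k)
    (Slam S0 : Finset (Fin N)) (hne : Slam.Nonempty) (hsub : Slam ⊆ S0) :
    compatConst Sig S0 / (S0.card : ℝ) ≤ compatConst Sig Slam / (Slam.card : ℝ) := by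
  set A := { q : ℝ | ∃ z : Fin N → ℝ,
    (∑ j ∈ S0ᶜ, |z j|) ≤ 3 * ∑ j ∈ S0, |z j| ∧ (∑ j ∈ S0, |z j|) ≠ 0 ∧
    q = (S0.card : ℝ) * (∑ i, ∑ k, z i * Sig i k * z k) / (∑ j ∈ S0, |z j|) ^ 2 } with hA
  set B := { q : ℝ | ∃ z : Fin N → ℝ,
    (∑ j ∈ Slamᶜ, |z j|) ≤ 3 * ∑ j ∈ Slam, |z j| ∧ (∑ j ∈ Slam, |z j|) ≠ 0 ∧
    q = (Slam.card : ℝ) * (∑ i, ∑ k, z i * Sig i k * z k) / (∑ j ∈ Slam, |z j|) ^ 2 }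
    with hB
  have hclam : (0 : ℝ) < (Slam.card : ℝ) := by
    exact_mod_cast Finset.card_pos.mpr hne
  have hc0 : (0 : ℝ) < (S0.card : ℝ) := by
    exact_mod_cast Finset.card_pos.mpr (hne.mono hsub)
  have hBddA : BddBelow A := by
    refine ⟨0, ?_⟩
    rintro q ⟨z, _, hz2, rfl⟩
    have := hPSD z
    positivity
  have hBne : B.Nonempty := by
    obtain ⟨i, hi⟩ := hne
    refine ⟨_, fun j => if j = i then 1 else 0, ?_, ?_, rfl⟩
    · have h1 : (∑ j ∈ Slamᶜ, |if j = i then (1:ℝ) else 0|) = 0 := by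
        apply Finset.sum_eq_zero
        intro j hj
        have : j ≠ i := by
          intro h; subst h; exact (Finset.mem_compl.mp hj) hi
        simp [this]
      rw [h1]
      have : (0:ℝ) ≤ ∑ j ∈ Slam, |if j = i then (1:ℝ) else 0| :=
        Finset.sum_nonneg fun _ _ => abs_nonneg _
      linarith
    · have : (∑ j ∈ Slam, |if j = i then (1:ℝ) else 0|) ≥ 1 := by
        have := Finset.single_le_sum (f := fun j => |if j = i then (1:ℝ) else 0|)
          (fun j _ => abs_nonneg _) hi
        simpa using this
      intro h; rw [h] at this; linarith
  have key : ∀ q ∈ B, compatConst Sig S0 / (S0.card : ℝ) * (Slam.card : ℝ) ≤ q := by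
    rintro q ⟨z, hz1, hz2, rfl⟩
    set Q := ∑ i, ∑ k, z i * Sig i k * z k with hQ
    have hQnn : 0 ≤ Q := hPSD z
    set Llam := ∑ j ∈ Slam, |z j| with hLlam
    set L0 := ∑ j ∈ S0, |z j| with hL0
    have hLlampos : 0 < Llam :=
      lt_of_le_of_ne (Finset.sum_nonneg fun _ _ => abs_nonneg _) (Ne.symm hz2)
    have hLle : Llam ≤ L0 :=
      Finset.sum_le_sum_of_subset_of_nonneg hsub fun _ _ _ => abs_nonneg _
    have hL0pos : 0 < L0 := lt_of_lt_of_le hLlampos hLle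
    have hmemA : (S0.card : ℝ) * Q / L0 ^ 2 ∈ A := by
      refine ⟨z, ?_, ne_of_gt hL0pos, rfl⟩
      calc (∑ j ∈ S0ᶜ, |z j|) ≤ ∑ j ∈ Slamᶜ, |z j| :=
            Finset.sum_le_sum_of_subset_of_nonneg
              (Finset.compl_subset_compl.mpr hsub) fun _ _ _ => abs_nonneg _
        _ ≤ 3 * Llam := hz1
        _ ≤ 3 * L0 := by linarith
    have h1 : compatConst Sig S0 ≤ (S0.card : ℝ) * Q / L0 ^ 2 :=
      csInf_le hBddA hmemA
    have h2 : compatConst Sig S0 / (S0.card : ℝ) ≤ Q / L0 ^ 2 := by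
      rw [div_le_iff₀ hc0]
      calc compatConst Sig S0 ≤ (S0.card : ℝ) * Q / L0 ^ 2 := h1
        _ = Q / L0 ^ 2 * (S0.card : ℝ) := by ring
    have h3 : Q / L0 ^ 2 ≤ Q / Llam ^ 2 := by
      have hsq : Llam ^ 2 ≤ L0 ^ 2 := by nlinarith
      gcongr
    calc compatConst Sig S0 / (S0.card : ℝ) * (Slam.card : ℝ)
        ≤ Q / Llam ^ 2 * (Slam.card : ℝ) :=
          mul_le_mul_of_nonneg_right (h2.trans h3) hclam.le
      _ = (Slam.card : ℝ) * Q / Llam ^ 2 := by ring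
  have : compatConst Sig S0 / (S0.card : ℝ) * (Slam.card : ℝ) ≤ compatConst Sig Slam := by
    unfold compatConst
    exact le_csInf hBne (by rw [hB] at key; exact key)
  calc compatConst Sig S0 / (S0.card : ℝ)
      = compatConst Sig S0 / (S0.card : ℝ) * (Slam.card : ℝ) / (Slam.card : ℝ) :=
        (mul_div_cancel_right₀ _ hclam.ne').symm
    _ ≤ compatConst Sig Slam / (Slam.card : ℝ) := by gcongr
end

section
/- Norm bound for the population nodewise coefficient vector: Let Σ be a symmetric positive definite N×N real matrix with N ≥ 2 and smallest eigenvalue Λ_min > 0. Fix j ∈ {1,…,N}, and let γ_j := (Σ_{−j,−j})⁻¹Σ_{−j,j} and τ_j² := Σ_{jj} − Σ_{j,−j}(Σ_{−j,−j})⁻¹Σ_{−j,j}. Then 1 + ‖γ_j‖₂² ≤ τ_j⁴ / Λ_min²; in particular ‖γ_j‖₂ ≤ τ_j² / Λ_min. -/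
open Finset Matrix

lemma aux_sum_split {N : ℕ} (j : Fin N) (f : Fin N → ℝ) :
    ∑ i, f i = f j + ∑ k : {k : Fin N // k ≠ j}, f k := by
  rw [Fintype.sum_eq_add_sum_compl j]
  congr 1
  exact (Finset.sum_subtype (p := fun k => k ≠ j) ({j}ᶜ) (fun x => by simp) f)

lemma aux_rayleigh {N : ℕ} (Sig : Matrix (Fin N) (Fin N) ℝ) (hSig : Sig.PosDef)
    (Λmin : ℝ) (hle : ∀ i, Λmin ≤ hSig.1.eigenvalues i) (v : Fin N → ℝ) :
    Λmin * (v ⬝ᵥ v) ≤ v ⬝ᵥ (Sig *ᵥ v) := by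
  set U : Matrix (Fin N) (Fin N) ℝ := (hSig.1.eigenvectorUnitary : Matrix (Fin N) (Fin N) ℝ)
  have hU : U * star U = 1 := (Matrix.mem_unitaryGroup_iff).mp hSig.1.eigenvectorUnitary.2
  have h1 : Λmin • (1 : Matrix (Fin N) (Fin N) ℝ) = U * (Λmin • 1) * star U := by
    rw [Matrix.mul_smul, Matrix.smul_mul, mul_one, hU]
  have h2 := hSig.1.spectral_theorem
  have hdecomp : Sig - Λmin • 1 =
      U * diagonal (fun i => hSig.1.eigenvalues i - Λmin) * star U := by
    have key : U * diagonal (fun i => hSig.1.eigenvalues i - Λmin) * star U =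
        U * diagonal (RCLike.ofReal ∘ hSig.1.eigenvalues) * star U - Λmin • 1 := by
      rw [h1, ← Matrix.sub_mul, ← Matrix.mul_sub]
      congr 1
      rw [← Matrix.diagonal_one, ← Matrix.diagonal_smul, Matrix.diagonal_sub]
      congr 1
      funext i
      simp
    rw [key]
    rw [Unitary.conjStarAlgAut_apply] at h2
    exact congrArg (· - Λmin • 1) h2
  have hps : (Sig - Λmin • 1).PosSemidef := by
    rw [hdecomp, Matrix.star_eq_conjTranspose]
    exact (Matrix.PosSemidef.diagonal
      (fun i => sub_nonneg.mpr (hle i))).mul_mul_conjTranspose_same U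
  have h3 := hps.dotProduct_mulVec_nonneg v
  have hstar : star v = v := by funext i; simp
  rw [hstar, Matrix.sub_mulVec, Matrix.smul_mulVec, Matrix.one_mulVec,
    dotProduct_sub, dotProduct_smul, smul_eq_mul] at h3
  linarith

/-- **Norm bound for the population nodewise coefficient vector.**
For a symmetric positive definite `Σ` with smallest eigenvalue `Λ_min > 0`,
with `γ_j = (Σ_{−j,−j})⁻¹Σ_{−j,j}` and the Schur complement `τ_j²`, one has
`1 + ‖γ_j‖₂² ≤ τ_j⁴ / Λ_min²`, and in particular `‖γ_j‖₂ ≤ τ_j² / Λ_min`. -/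
theorem nodewise_gamma_norm_bound
    {N : ℕ} (hN : 2 ≤ N) (Sig : Matrix (Fin N) (Fin N) ℝ)
    (hSig : Sig.PosDef) (j : Fin N)
    (Λmin : ℝ) (hΛ : Λmin = Finset.univ.inf' ⟨j, Finset.mem_univ j⟩ hSig.1.eigenvalues)
    (hΛpos : 0 < Λmin)
    (γ : {k : Fin N // k ≠ j} → ℝ)
    (hγ : γ = (Matrix.of fun k l : {k : Fin N // k ≠ j} =>
        Sig (k : Fin N) (l : Fin N))⁻¹.mulVec
        (fun k : {k : Fin N // k ≠ j} => Sig (k : Fin N) j))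
    (τsq : ℝ)
    (hτ : τsq = Sig j j - ∑ k : {k : Fin N // k ≠ j}, Sig j (k : Fin N) * γ k) :
    1 + ∑ k, (γ k) ^ 2 ≤ τsq ^ 2 / Λmin ^ 2 ∧
      Real.sqrt (∑ k, (γ k) ^ 2) ≤ τsq / Λmin := by
  classical
  set A : Matrix {k : Fin N // k ≠ j} {k : Fin N // k ≠ j} ℝ :=
    Matrix.of fun k l : {k : Fin N // k ≠ j} => Sig (k : Fin N) (l : Fin N) with hA
  set b : {k : Fin N // k ≠ j} → ℝ := fun k => Sig (k : Fin N) j with hb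
  -- Sig is symmetric entrywise
  have hsym : ∀ p q : Fin N, Sig p q = Sig q p := by
    intro p q
    have := congrFun (congrFun hSig.1 p) q
    simpa [Matrix.conjTranspose_apply] using this.symm
  -- A is positive definite
  have hApd : A.PosDef := by
    refine Matrix.PosDef.of_dotProduct_mulVec_pos ?_ ?_
    · funext k l
      simp [Matrix.conjTranspose_apply, hA, hsym l.1 k.1]
    · intro x hx
      set y : Fin N → ℝ := fun i => if h : i = j then 0 else x ⟨i, h⟩ with hy
      have hyk : ∀ k : {k : Fin N // k ≠ j}, y (k : Fin N) = x k := by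
        intro k; simp [hy, k.2]
      have hyne : y ≠ 0 := by
        intro h0
        apply hx
        funext k
        have := congrFun h0 (k : Fin N)
        rwa [hyk k] at this
      have hquad : x ⬝ᵥ (A *ᵥ x) = y ⬝ᵥ (Sig *ᵥ y) := by
        have hmv : ∀ i : Fin N, (Sig *ᵥ y) i = ∑ l : {k : Fin N // k ≠ j}, Sig i l * x l := by
          intro i
          rw [Matrix.mulVec, dotProduct, aux_sum_split j (fun l => Sig i l * y l)]
          have hyj : y j = 0 := by simp [hy]
          rw [hyj, mul_zero, zero_add]
          exact Finset.sum_congr rfl fun l _ => by rw [hyk l]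
        conv_rhs => rw [dotProduct, aux_sum_split j (fun i => y i * (Sig *ᵥ y) i)]
        rw [dotProduct]
        have hyj : y j = 0 := by simp [hy]
        rw [hyj, zero_mul, zero_add]
        apply Finset.sum_congr rfl
        intro k _
        rw [hmv, hyk]
        rfl
      have h := hSig.dotProduct_mulVec_pos hyne
      have hsy : star y = y := by funext i; simp
      rw [hsy] at h
      have hsx : star x = x := by funext i; simp
      rw [hsx, hquad]
      exact h
  -- A γ = b
  have hAγ : A *ᵥ γ = b := by
    rw [hγ, Matrix.mulVec_mulVec,
      Matrix.mul_nonsing_inv A ((Matrix.isUnit_iff_isUnit_det A).mp hApd.isUnit),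
      Matrix.one_mulVec]
  -- the test vector
  set v : Fin N → ℝ := fun i => if h : i = j then 1 else -γ ⟨i, h⟩ with hv
  have hvj : v j = 1 := by simp [hv]
  have hvk : ∀ k : {k : Fin N // k ≠ j}, v (k : Fin N) = -γ k := by
    intro k; simp [hv, k.2]
  -- (Sig v)_j = τsq
  have hmvj : (Sig *ᵥ v) j = τsq := by
    rw [Matrix.mulVec, dotProduct, aux_sum_split j (fun l => Sig j l * v l),
      hvj, mul_one]
    have h1 : ∑ l : {k : Fin N // k ≠ j}, Sig j (l : Fin N) * v (l : Fin N)
        = -∑ l : {k : Fin N // k ≠ j}, Sig j (l : Fin N) * γ l := by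
      rw [← Finset.sum_neg_distrib]
      exact Finset.sum_congr rfl fun l _ => by rw [hvk l]; ring
    rw [h1, hτ]
    ring
  -- (Sig v)_k = 0 for k ≠ j
  have hmvk : ∀ k : {k : Fin N // k ≠ j}, (Sig *ᵥ v) (k : Fin N) = 0 := by
    intro k
    rw [Matrix.mulVec, dotProduct, aux_sum_split j (fun l => Sig (k : Fin N) l * v l),
      hvj, mul_one]
    have h1 : ∑ l : {k : Fin N // k ≠ j}, Sig (k : Fin N) (l : Fin N) * v (l : Fin N)
        = -∑ l : {k : Fin N // k ≠ j}, A k l * γ l := by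
      rw [← Finset.sum_neg_distrib]
      refine Finset.sum_congr rfl fun l _ => ?_
      rw [hvk l]
      show Sig (k : Fin N) (l : Fin N) * -γ l = -(Sig (k : Fin N) (l : Fin N) * γ l)
      ring
    rw [h1]
    have h2 : ∑ l : {k : Fin N // k ≠ j}, A k l * γ l = b k := by
      rw [← hAγ]; rfl
    rw [h2]
    simp [hb]
  -- quadratic form equals τsq
  have hquadv : v ⬝ᵥ (Sig *ᵥ v) = τsq := by
    rw [dotProduct, aux_sum_split j (fun i => v i * (Sig *ᵥ v) i), hvj, one_mul, hmvj]
    have h0 : ∑ k : {k : Fin N // k ≠ j}, v (k : Fin N) * (Sig *ᵥ v) (k : Fin N) = 0 :=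
      Finset.sum_eq_zero fun k _ => by rw [hmvk k, mul_zero]
    rw [h0, add_zero]
  -- norm of v
  have hnormv : v ⬝ᵥ v = 1 + ∑ k, (γ k) ^ 2 := by
    rw [dotProduct, aux_sum_split j (fun i => v i * v i), hvj, one_mul]
    congr 1
    exact Finset.sum_congr rfl fun k _ => by rw [hvk k]; ring
  -- Rayleigh bound
  have hle : ∀ i, Λmin ≤ hSig.1.eigenvalues i := by
    intro i
    rw [hΛ]
    exact Finset.inf'_le _ (Finset.mem_univ i)
  have hray := aux_rayleigh Sig hSig Λmin hle v
  rw [hquadv, hnormv] at hray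
  -- final arithmetic
  set s : ℝ := ∑ k, (γ k) ^ 2 with hs
  have hs0 : 0 ≤ s := Finset.sum_nonneg fun k _ => sq_nonneg _
  have hone : 1 + s ≤ τsq / Λmin := by
    rw [le_div_iff₀ hΛpos]
    nlinarith
  have ha1 : 1 ≤ τsq / Λmin := by linarith
  have ha0 : 0 ≤ τsq / Λmin := by linarith
  constructor
  · calc 1 + s ≤ τsq / Λmin := hone
      _ ≤ (τsq / Λmin) ^ 2 := le_self_pow₀ ha1 two_ne_zero
      _ = τsq ^ 2 / Λmin ^ 2 := by rw [div_pow]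
  · have hsle : s ≤ (τsq / Λmin) ^ 2 := by nlinarith
    calc Real.sqrt s ≤ Real.sqrt ((τsq / Λmin) ^ 2) := Real.sqrt_le_sqrt hsle
      _ = τsq / Λmin := by rw [Real.sqrt_sq ha0]
end

section
/- Deterministic bound on the nodewise noise-level estimate (Lemma B.4, first claim): Fix j, λ_j > 0, 0 ≤ r < 1, and reals ε, δ, s, G, τ_j² ≥ 0. Let γ_j⁰ ∈ ℝ^{N−1}, v_j := x_j − X_{−j}γ_j⁰, let γ̂_j be any minimizer of γ ↦ ‖x_j − X_{−j}γ‖₂²/T + 2λ_j‖γ‖₁, and let τ̂_j² := ‖x_j − X_{−j}γ̂_j‖₂²/T + 2λ_j‖γ̂_j‖₁. Assume (i) |‖v_j‖₂²/T − τ_j²| ≤ ε; (ii) ‖X_{−j}(γ̂_j − γ_j⁰)‖₂²/T + λ_j‖γ̂_j − γ_j⁰‖₁ ≤ δ; (iii) max_{k≠j} |v_jᵀx_k| ≤ Tλ_j/4; (iv) Σ_{k≠j} |(γ_j⁰)_k|^r ≤ s; and (v) ‖γ_j⁰‖₂ ≤ G. Then |τ̂_j² − τ_j²| ≤ ε + (7/2)·δ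 + 2·λ_j^{2−r}·s + 2·λ_j^{1−r/2}·√s·G. -/
open Finset Matrix

/-- The nodewise lasso objective: `‖x_j − X_{−j}γ‖₂²/T + 2λ_j‖γ‖₁`, where a vector
`γ : Fin N → ℝ` with `γ j = 0` encodes an element of `ℝ^{N−1}` (the coefficient on
the deleted `j`-th column being forced to zero, so `X_{−j}γ = Xγ`). -/
noncomputable def nodewiseObj {T N : ℕ} (X : Matrix (Fin T) (Fin N) ℝ)
    (j : Fin N) (lam : ℝ) (γ : Fin N → ℝ) : ℝ :=
  (∑ t, (X t j - X.mulVec γ t) ^ 2) / (T : ℝ) + 2 * lam * ∑ k, |γ k|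

lemma sparsity_bound {N : ℕ} (lam r s G : ℝ) (hlam : 0 < lam) (hr0 : 0 ≤ r) (hr1 : r < 1)
    (hs : 0 ≤ s) (hG : 0 ≤ G) (γ0 : Fin N → ℝ)
    (h4 : ∑ k, (if γ0 k = 0 then (0:ℝ) else |γ0 k| ^ r) ≤ s)
    -- (v)
    (h5 : Real.sqrt (∑ k, (γ0 k) ^ 2) ≤ G) :
    lam * ∑ k, |γ0 k| ≤ lam ^ (2 - r) * s + lam ^ (1 - r / 2) * Real.sqrt s * G := by
  set A := Finset.univ.filter (fun k : Fin N => |γ0 k| ≤ lam) with hA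
  set B := Finset.univ.filter (fun k : Fin N => ¬ |γ0 k| ≤ lam) with hB
  have hsplit : ∑ k, |γ0 k| = ∑ k ∈ A, |γ0 k| + ∑ k ∈ B, |γ0 k| :=
    (Finset.sum_filter_add_sum_filter_not _ _ _).symm
  have h4nonneg : ∀ k : Fin N, 0 ≤ (if γ0 k = 0 then (0:ℝ) else |γ0 k| ^ r) := by
    intro k; split
    · exact le_rfl
    · positivity
  -- A part
  have hApart : ∑ k ∈ A, |γ0 k| ≤ lam ^ (1 - r) * s := by
    have step : ∑ k ∈ A, |γ0 k| ≤ ∑ k ∈ A, lam ^ (1 - r) * (if γ0 k = 0 then (0:ℝ) else |γ0 k| ^ r) := by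
      apply Finset.sum_le_sum
      intro k hk
      rcases eq_or_ne (γ0 k) 0 with h0 | h0
      · simp [h0]
      · simp only [h0, if_neg, if_false]
        have habs : 0 < |γ0 k| := abs_pos.mpr h0
        have hk' : |γ0 k| ≤ lam := (Finset.mem_filter.mp hk).2
        calc |γ0 k| = |γ0 k| ^ (1 - r) * |γ0 k| ^ r := by
              rw [← Real.rpow_add habs, show (1:ℝ) - r + r = 1 by ring, Real.rpow_one]
          _ ≤ lam ^ (1 - r) * |γ0 k| ^ r :=
              mul_le_mul_of_nonneg_right (Real.rpow_le_rpow habs.le hk' (by linarith))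
                (Real.rpow_nonneg (abs_nonneg _) r)
    calc ∑ k ∈ A, |γ0 k| ≤ lam ^ (1 - r) * ∑ k ∈ A, (if γ0 k = 0 then (0:ℝ) else |γ0 k| ^ r) := by
          rw [Finset.mul_sum]; exact step
      _ ≤ lam ^ (1 - r) * s := by
          refine mul_le_mul_of_nonneg_left ?_ (by positivity)
          calc ∑ k ∈ A, (if γ0 k = 0 then (0:ℝ) else |γ0 k| ^ r)
              ≤ ∑ k, (if γ0 k = 0 then (0:ℝ) else |γ0 k| ^ r) :=
                Finset.sum_le_sum_of_subset_of_nonneg (Finset.subset_univ _)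
                  (fun k _ _ => h4nonneg k)
            _ ≤ s := h4
  -- card of B
  have hcardB : (B.card : ℝ) * lam ^ r ≤ s := by
    have : ∀ k ∈ B, lam ^ r ≤ (if γ0 k = 0 then (0:ℝ) else |γ0 k| ^ r) := by
      intro k hk
      have hk' : lam < |γ0 k| := lt_of_not_ge (Finset.mem_filter.mp hk).2
      have h0 : γ0 k ≠ 0 := by
        intro h; rw [h] at hk'; simp at hk'; linarith
      simp only [h0, if_neg, if_false]
      exact Real.rpow_le_rpow hlam.le hk'.le hr0
    calc (B.card : ℝ) * lam ^ r = ∑ _k ∈ B, lam ^ r := by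
          rw [Finset.sum_const, nsmul_eq_mul]
      _ ≤ ∑ k ∈ B, (if γ0 k = 0 then (0:ℝ) else |γ0 k| ^ r) := Finset.sum_le_sum this
      _ ≤ ∑ k, (if γ0 k = 0 then (0:ℝ) else |γ0 k| ^ r) :=
          Finset.sum_le_sum_of_subset_of_nonneg (Finset.subset_univ _) (fun k _ _ => h4nonneg k)
      _ ≤ s := h4
  -- sum of squares
  have hsumsq : ∑ k ∈ B, (γ0 k) ^ 2 ≤ G ^ 2 := by
    have h1 : ∑ k ∈ B, (γ0 k) ^ 2 ≤ ∑ k, (γ0 k) ^ 2 :=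
      Finset.sum_le_sum_of_subset_of_nonneg (Finset.subset_univ _) (fun k _ _ => sq_nonneg _)
    have h2 : ∑ k, (γ0 k) ^ 2 ≤ G ^ 2 := by
      have := Real.sq_sqrt (by positivity : (0:ℝ) ≤ ∑ k, (γ0 k) ^ 2)
      nlinarith [h5, Real.sqrt_nonneg (∑ k, (γ0 k) ^ 2)]
    linarith
  -- Cauchy-Schwarz on B
  have hBpart : ∑ k ∈ B, |γ0 k| ≤ Real.sqrt ((B.card : ℝ)) * G := by
    have hcs := Finset.sum_mul_sq_le_sq_mul_sq B (fun _ => (1:ℝ)) (fun k => |γ0 k|)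
    simp only [one_mul, one_pow, Finset.sum_const, nsmul_eq_mul, mul_one, sq_abs] at hcs
    have hnn : 0 ≤ ∑ k ∈ B, |γ0 k| := Finset.sum_nonneg fun k _ => abs_nonneg _
    have hsq : (∑ k ∈ B, |γ0 k|) ^ 2 ≤ (B.card : ℝ) * G ^ 2 := by
      calc (∑ k ∈ B, |γ0 k|) ^ 2 ≤ (B.card : ℝ) * ∑ k ∈ B, (γ0 k) ^ 2 := hcs
        _ ≤ (B.card : ℝ) * G ^ 2 := mul_le_mul_of_nonneg_left hsumsq (Nat.cast_nonneg _)
    have := Real.sqrt_le_sqrt hsq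
    rwa [Real.sqrt_sq hnn, Real.sqrt_mul (Nat.cast_nonneg _), Real.sqrt_sq hG] at this
  -- combine
  have hcardB' : Real.sqrt ((B.card : ℝ)) ≤ Real.sqrt s * lam ^ (-(r/2)) := by
    have hcard : (B.card : ℝ) ≤ s * lam ^ (-r) := by
      have hp : (0:ℝ) < lam ^ r := Real.rpow_pos_of_pos hlam r
      rw [Real.rpow_neg hlam.le, ← div_eq_mul_inv]
      exact (le_div_iff₀ hp).mpr hcardB
    calc Real.sqrt ((B.card : ℝ)) ≤ Real.sqrt (s * lam ^ (-r)) := Real.sqrt_le_sqrt hcard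
      _ = Real.sqrt s * lam ^ (-(r/2)) := by
          rw [Real.sqrt_mul hs]
          congr 1
          rw [Real.sqrt_eq_rpow, ← Real.rpow_mul hlam.le]
          congr 1
          ring
  have key : lam * (lam ^ (1 - r) * s) = lam ^ (2 - r) * s := by
    rw [show (2 - r) = 1 + (1 - r) by ring, Real.rpow_add hlam, Real.rpow_one]
    ring
  have key2 : lam * (Real.sqrt s * lam ^ (-(r/2)) * G) = lam ^ (1 - r/2) * Real.sqrt s * G := by
    rw [show (1 - r/2) = 1 + (-(r/2)) by ring, Real.rpow_add hlam, Real.rpow_one]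
    ring
  have hBpart' : ∑ k ∈ B, |γ0 k| ≤ Real.sqrt s * lam ^ (-(r/2)) * G := by
    calc ∑ k ∈ B, |γ0 k| ≤ Real.sqrt ((B.card : ℝ)) * G := hBpart
      _ ≤ Real.sqrt s * lam ^ (-(r/2)) * G := by gcongr
  rw [hsplit, mul_add, ← key, ← key2]
  exact add_le_add (mul_le_mul_of_nonneg_left hApart hlam.le)
    (mul_le_mul_of_nonneg_left hBpart' hlam.le)

set_option maxHeartbeats 1000000 in
/-- **Deterministic bound on the nodewise noise-level estimate (Lemma B.4, first claim).**
`|c|^0` is read as 1 if `c ≠ 0` and 0 otherwise. -/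
theorem nodewise_tauhat_bound
    {T N : ℕ} (hT : 0 < T) (hN : 2 ≤ N)
    (X : Matrix (Fin T) (Fin N) ℝ) (j : Fin N)
    (lam r ε δ s G τsq : ℝ)
    (hlam : 0 < lam) (hr0 : 0 ≤ r) (hr1 : r < 1)
    (hε : 0 ≤ ε) (hδ : 0 ≤ δ) (hs : 0 ≤ s) (hG : 0 ≤ G) (hτsq : 0 ≤ τsq)
    (γ0 γhat : Fin N → ℝ) (hγ0j : γ0 j = 0) (hγhatj : γhat j = 0)
    (v : Fin T → ℝ) (hv : v = fun t => X t j - X.mulVec γ0 t)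
    (hmin : ∀ γ : Fin N → ℝ, γ j = 0 →
      nodewiseObj X j lam γhat ≤ nodewiseObj X j lam γ)
    (τhatsq : ℝ) (hτhat : τhatsq = nodewiseObj X j lam γhat)
    -- (i)
    (h1 : |(∑ t, (v t) ^ 2) / (T : ℝ) - τsq| ≤ ε)
    -- (ii)
    (h2 : (∑ t, (X.mulVec (γhat - γ0) t) ^ 2) / (T : ℝ)
            + lam * ∑ k, |γhat k - γ0 k| ≤ δ)
    -- (iii)
    (h3 : ∀ k, k ≠ j → |∑ t, v t * X t k| ≤ (T : ℝ) * lam / 4)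
    -- (iv) weak sparsity of γ_j⁰
    (h4 : ∑ k, (if γ0 k = 0 then (0:ℝ) else |γ0 k| ^ r) ≤ s)
    -- (v)
    (h5 : Real.sqrt (∑ k, (γ0 k) ^ 2) ≤ G) :
    |τhatsq - τsq| ≤ ε + (7 / 2) * δ + 2 * lam ^ (2 - r) * s
      + 2 * lam ^ (1 - r / 2) * Real.sqrt s * G := by
  have hTpos : (0:ℝ) < (T:ℝ) := by exact_mod_cast hT
  set w : Fin T → ℝ := X.mulVec (γhat - γ0) with hw
  set C : ℝ := ∑ t, v t * w t with hCdef
  set Q : ℝ := (∑ t, w t ^ 2) / (T : ℝ) with hQdef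
  set S1 : ℝ := (∑ t, v t ^ 2) / (T : ℝ) with hS1def
  set L : ℝ := ∑ k, |γhat k| with hLdef
  set D : ℝ := ∑ k, |γhat k - γ0 k| with hDdef
  -- pointwise residual identity
  have hres : ∀ t, X t j - X.mulVec γhat t = v t - w t := by
    intro t
    have : X.mulVec (γhat - γ0) t = X.mulVec γhat t - X.mulVec γ0 t := by
      rw [Matrix.mulVec_sub]; rfl
    rw [hv, hw, this]; ring
  -- expansion
  have hexp : τhatsq = S1 - 2 * C / (T:ℝ) + Q + 2 * lam * L := by
    rw [hτhat, nodewiseObj]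
    have : ∑ t, (X t j - X.mulVec γhat t) ^ 2
        = ∑ t, (v t) ^ 2 - 2 * C + ∑ t, (w t) ^ 2 := by
      rw [hCdef, Finset.mul_sum, ← Finset.sum_sub_distrib, ← Finset.sum_add_distrib]
      apply Finset.sum_congr rfl
      intro t _
      rw [hres t]; ring
    rw [this, hS1def, hQdef, hLdef]
    field_simp
  -- cross term rewrite
  have hC : C = ∑ k, (γhat k - γ0 k) * (∑ t, v t * X t k) := by
    rw [hCdef, hw]
    simp only [Matrix.mulVec, dotProduct, Pi.sub_apply, Finset.mul_sum]
    rw [Finset.sum_comm]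
    exact Finset.sum_congr rfl fun k _ => Finset.sum_congr rfl fun t _ => by ring
  -- cross term bound
  have hCbound : |C| ≤ (T:ℝ) * lam / 4 * D := by
    rw [hC]
    calc |∑ k, (γhat k - γ0 k) * (∑ t, v t * X t k)|
        ≤ ∑ k, |(γhat k - γ0 k) * (∑ t, v t * X t k)| := Finset.abs_sum_le_sum_abs _ _
      _ ≤ ∑ k, |γhat k - γ0 k| * ((T:ℝ) * lam / 4) := by
          apply Finset.sum_le_sum
          intro k _
          rw [abs_mul]
          rcases eq_or_ne k j with hk | hk
          · subst hk
            simp [hγhatj, hγ0j]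
          · exact mul_le_mul_of_nonneg_left (h3 k hk) (abs_nonneg _)
      _ = (T:ℝ) * lam / 4 * D := by rw [hDdef, ← Finset.sum_mul]; ring
  -- parts of h2
  have hQ0 : 0 ≤ Q := by rw [hQdef]; positivity
  have hD0 : 0 ≤ D := Finset.sum_nonneg fun k _ => abs_nonneg _
  have hQδ : Q ≤ δ := by nlinarith [mul_le_mul_of_nonneg_left hD0 hlam.le]
  have hDδ : lam * D ≤ δ := by nlinarith
  -- cross term final
  have hC2 : |2 * C / (T:ℝ)| ≤ δ / 2 := by
    rw [abs_div, abs_mul, abs_of_pos hTpos]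
    rw [div_le_iff₀ hTpos]
    have : |(2:ℝ)| = 2 := by norm_num
    rw [this]
    nlinarith [hCbound, abs_nonneg C]
  -- L1 bound on γhat
  have hγ0sum0 : 0 ≤ ∑ k, |γ0 k| := Finset.sum_nonneg fun k _ => abs_nonneg _
  have hL : L ≤ D + ∑ k, |γ0 k| := by
    rw [hLdef, hDdef, ← Finset.sum_add_distrib]
    apply Finset.sum_le_sum
    intro k _
    calc |γhat k| = |(γhat k - γ0 k) + γ0 k| := by ring_nf
      _ ≤ |γhat k - γ0 k| + |γ0 k| := abs_add_le _ _
  have hsp := sparsity_bound lam r s G hlam hr0 hr1 hs hG γ0 h4 h5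
  have hLbound : 2 * lam * L ≤ 2 * δ + 2 * lam ^ (2 - r) * s
      + 2 * lam ^ (1 - r/2) * Real.sqrt s * G := by
    have h' : lam * L ≤ lam * D + lam * ∑ k, |γ0 k| := by
      have := mul_le_mul_of_nonneg_left hL hlam.le
      rw [mul_add] at this
      exact this
    have h2l : 2 * lam * L = 2 * (lam * L) := by ring
    rw [h2l]
    linarith [hDδ, hsp, h']
  have hL0 : 0 ≤ 2 * lam * L := by
    have : 0 ≤ L := Finset.sum_nonneg fun k _ => abs_nonneg _
    positivity
  -- combine
  have hS1b := abs_le.mp h1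
  have hC2b := abs_le.mp hC2
  have hpow1 : 0 ≤ 2 * lam ^ (2 - r) * s :=
    mul_nonneg (mul_nonneg (by norm_num) (Real.rpow_nonneg hlam.le _)) hs
  have hpow2 : 0 ≤ 2 * lam ^ (1 - r/2) * Real.sqrt s * G :=
    mul_nonneg (mul_nonneg (mul_nonneg (by norm_num) (Real.rpow_nonneg hlam.le _))
      (Real.sqrt_nonneg s)) hG
  rw [abs_le]
  constructor <;> [skip; skip] <;>
  · rw [hexp]
    obtain ⟨a1, a2⟩ := hS1b
    obtain ⟨b1, b2⟩ := hC2b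
    linarith
end
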